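/- arXiv:1812.06642 — 2 statements merged into one kernel-verified Lean document; each statement's English description precedes it below -/
import Mathlib

section
/- Let $F$ and $G$ be division rings and $M$ a nonzero $F$-$G$-bimodule with $\dim_F M = \dim M_G = 1$. Then the $G$-$F$-bimodules $M^L = \operatorname{Hom}_F(M, F)$ (homomorphisms of left $F$-modules) and $M^R = \operatorname{Hom}_G(M, G)$ (homomorphisms of right $G$-modules) are isomorphic as $G$-$F$-bimodules. -/
open MulOpposite

/-- Let `M` be a nonzero `F`-`G`-bimodule over division rings with both the left
dimension over `F` and the right dimension over `G` equal to one.  Then the left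
dual `M^L = Hom_F(M, F)` and the right dual `M^R = Hom_G(M, G)` are isomorphic
as `G`-`F`-bimodules: there is an additive equivalence
`e : (M →ₗ[F] F) ≃+ (M →ₗ[Gᵐᵒᵖ] Gᵐᵒᵖ)` intertwining the `G`-`F`-bimodule
actions, which are given by `(g • φ • c) m = φ (m g) * c` on `M^L` and by
`(g • ψ • c) m = g * ψ (c • m)` on `M^R`. -/
theorem leftDual_iso_rightDual_of_bimodule_dim_one
    {F G M : Type*} [DivisionRing F] [DivisionRing G]
    [AddCommGroup M] [Module F M] [Module Gᵐᵒᵖ M] [SMulCommClass F Gᵐᵒᵖ M]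
    (hM : ∃ m : M, m ≠ 0)
    (hF : Module.rank F M = 1)
    (hG : Module.rank Gᵐᵒᵖ M = 1) :
    ∃ e : (M →ₗ[F] F) ≃+ (M →ₗ[Gᵐᵒᵖ] Gᵐᵒᵖ),
      ∀ (φ φ' : M →ₗ[F] F) (g : G) (c : F),
        (∀ m : M, φ' m = φ (op g • m) * c) →
        ∀ m : M, e φ' m = op (g * unop (e φ (c • m))) := by
  obtain ⟨m₀, hm₀⟩ := hM
  have hFtop : Submodule.span F {m₀} = ⊤ :=
    (finrank_eq_one_iff_of_nonzero m₀ hm₀).mp (Module.rank_eq_one_iff_finrank_eq_one.mp hF)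
  have hGtop : Submodule.span Gᵐᵒᵖ {m₀} = ⊤ :=
    (finrank_eq_one_iff_of_nonzero m₀ hm₀).mp (Module.rank_eq_one_iff_finrank_eq_one.mp hG)
  let eF : F ≃ₗ[F] M :=
    (LinearEquiv.toSpanNonzeroSingleton F M m₀ hm₀).trans (LinearEquiv.ofTop _ hFtop)
  let eG : Gᵐᵒᵖ ≃ₗ[Gᵐᵒᵖ] M :=
    (LinearEquiv.toSpanNonzeroSingleton Gᵐᵒᵖ M m₀ hm₀).trans (LinearEquiv.ofTop _ hGtop)
  have heF : ∀ f : F, eF f = f • m₀ := fun f => rfl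
  have heG : ∀ g : Gᵐᵒᵖ, eG g = g • m₀ := fun g => rfl
  set σ : F ≃+ Gᵐᵒᵖ := eF.toAddEquiv.trans eG.symm.toAddEquiv with hσdef
  have hσ : ∀ f : F, (σ f) • m₀ = f • m₀ := by
    intro f
    have : eG (σ f) = eF f := eG.apply_symm_apply (eF f)
    rw [heG, heF] at this
    exact this
  have hσs : ∀ g : Gᵐᵒᵖ, (σ.symm g) • m₀ = g • m₀ := by
    intro g
    have := hσ (σ.symm g)
    rw [σ.apply_symm_apply] at this
    exact this.symm
  have hcF : ∀ m : M, (eF.symm m) • m₀ = m := fun m => eF.apply_symm_apply m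
  have hcF1 : eF.symm m₀ = (1 : F) := by
    apply eF.injective; rw [eF.apply_symm_apply, heF, one_smul]
  have hanti : ∀ a b : F, σ (a * b) = σ b * σ a := by
    intro a b
    apply eG.injective
    rw [heG, heG, hσ, mul_smul, mul_smul, ← hσ b, smul_comm, hσ a]
  have hsymm_mul : ∀ m : M, ∀ h : Gᵐᵒᵖ, eF.symm (h • m) = eF.symm m * σ.symm h := by
    intro m h
    apply eF.injective
    rw [eF.apply_symm_apply, heF, mul_smul, hσs, smul_comm, hcF]
  let fwd : (M →ₗ[F] F) → (M →ₗ[Gᵐᵒᵖ] Gᵐᵒᵖ) := fun φ =>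
    { toFun := fun m => σ (φ m₀ * eF.symm m)
      map_add' := fun x y => by rw [map_add, mul_add, map_add]
      map_smul' := fun h m => by
        dsimp only [RingHom.id_apply]
        rw [hsymm_mul, smul_eq_mul, ← mul_assoc, hanti, σ.apply_symm_apply] }
  let bwd : (M →ₗ[Gᵐᵒᵖ] Gᵐᵒᵖ) → (M →ₗ[F] F) := fun ψ =>
    { toFun := fun m => eF.symm m * σ.symm (ψ m₀)
      map_add' := fun x y => by rw [map_add, add_mul]
      map_smul' := fun a m => by
        dsimp only [RingHom.id_apply]
        rw [map_smul, smul_eq_mul, smul_eq_mul, mul_assoc] }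
  have hfwd : ∀ φ m, fwd φ m = σ (φ m₀ * eF.symm m) := fun _ _ => rfl
  have hbwd : ∀ ψ m, bwd ψ m = eF.symm m * σ.symm (ψ m₀) := fun _ _ => rfl
  refine ⟨{ toFun := fwd
            invFun := bwd
            left_inv := ?_
            right_inv := ?_
            map_add' := ?_ }, ?_⟩
  · intro φ
    ext m
    rw [hbwd, hfwd, hcF1, mul_one, σ.symm_apply_apply]
    conv_rhs => rw [← hcF m]
    rw [map_smul, smul_eq_mul]
  · intro ψ
    ext m
    rw [hfwd, hbwd, hcF1, one_mul, hanti, σ.apply_symm_apply]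
    conv_rhs => rw [← hcF m, ← hσ (eF.symm m), map_smul, smul_eq_mul]
  · intro φ φ'
    ext m
    simp only [hfwd, LinearMap.add_apply, add_mul, map_add]
  · intro φ φ' g c h m
    show fwd φ' m = op (g * unop (fwd φ (c • m)))
    simp only [hfwd]
    have h1 : φ' m₀ = σ.symm (op g) * (φ m₀ * c) := by
      rw [h m₀, ← hσs (op g), map_smul, smul_eq_mul, mul_assoc]
    have h2 : eF.symm (c • m) = c * eF.symm m := by
      rw [map_smul, smul_eq_mul]
    have key : ∀ x : Gᵐᵒᵖ, op (g * unop x) = x * op g := fun x => rfl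
    rw [h1, h2, key, mul_assoc, hanti, σ.apply_symm_apply, mul_assoc]
end

section
/- For every integer $m \ge 3$, the sequence $(m-2, 1, 2, 2, \ldots, 2, 1)$ of length $m$ (first entry $m-2$, second entry $1$, then $m-3$ entries equal to $2$, last entry $1$) is a dimension sequence. -/
/-- A sequence `a 1, …, a m` is a dimension sequence provided there exist
`x i, y i` (`1 ≤ i ≤ m`) that are nonnegative, with boundary conditions
`x 0 = -1`, `y 0 = y m = x 1 = 0`, `x m = y 1 = 1`, satisfying
`a i * x i = x (i-1) + x (i+1)` and `a i * y i = y (i-1) + y (i+1)` for `1 ≤ i < m`. -/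
def IsDimensionSequence (m : ℕ) (a : ℕ → ℤ) : Prop :=
  ∃ x y : ℕ → ℤ,
    x 0 = -1 ∧ x 1 = 0 ∧ x m = 1 ∧
    y 0 = 0 ∧ y 1 = 1 ∧ y m = 0 ∧
    (∀ i, 1 ≤ i → i ≤ m → 0 ≤ x i ∧ 0 ≤ y i) ∧
    (∀ i, 1 ≤ i → i < m →
      a i * x i = x (i - 1) + x (i + 1) ∧ a i * y i = y (i - 1) + y (i + 1))

/-- For every `m ≥ 3`, the sequence `(m-2, 1, 2, 2, …, 2, 1)` of length `m`
(first entry `m-2`, second entry `1`, then `m-3` entries equal to `2`, and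
last entry `1`) is a dimension sequence. -/
theorem isDimensionSequence_koethe (m : ℕ) (hm : 3 ≤ m) :
    IsDimensionSequence m
      (fun i => if i = 1 then (m : ℤ) - 2 else if i = 2 then 1
        else if i = m then 1 else 2) := by
  refine ⟨fun i => if i = 0 then -1 else if i = 1 then 0 else 1,
    fun i => if i = 0 then 0 else if i = 1 then 1 else (m : ℤ) - i, ?_, ?_, ?_, ?_, ?_, ?_, ?_, ?_⟩
  · simp
  · simp
  · have h0 : m ≠ 0 := by omega
    have h1 : m ≠ 1 := by omega
    simp [h0, h1]
  · simp
  · simp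
  · have h0 : m ≠ 0 := by omega
    have h1 : m ≠ 1 := by omega
    simp [h0, h1]
  · intro i h1 h2
    dsimp only
    constructor
    · split <;> [omega; (split <;> norm_num)]
    · have : i ≠ 0 := by omega
      split
      · omega
      · split
        · norm_num
        · have : (i : ℤ) ≤ m := by exact_mod_cast h2
          omega
  · intro i hi1 hi2
    rcases Nat.lt_or_ge i 3 with h3 | h3
    · interval_cases i
      · have hm1 : m ≠ 1 := by omega
        simp
      · have hm2 : 2 ≠ m := by omega
        have h3m : (3 : ℕ) ≠ 0 := by norm_num
        simp only [if_pos rfl, if_neg (by norm_num : (2:ℕ) ≠ 1),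
          if_neg hm2, if_neg (by norm_num : (2:ℕ) ≠ 0),
          if_neg (by norm_num : (3:ℕ) ≠ 0), if_neg (by norm_num : (3:ℕ) ≠ 1)]
        push_cast
        exact ⟨trivial, by ring⟩
    · have h1 : i ≠ 1 := by omega
      have h2 : i ≠ 2 := by omega
      have h0 : i ≠ 0 := by omega
      have him : i ≠ m := by omega
      have hi10 : i - 1 ≠ 0 := by omega
      have hi11 : i - 1 ≠ 1 := by omega
      have hp0 : i + 1 ≠ 0 := by omega
      have hp1 : i + 1 ≠ 1 := by omega
      simp only [if_neg h1, if_neg h2, if_neg him, if_neg h0, if_neg hi10, if_neg hi11,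
        if_neg hp0, if_neg hp1]
      have : ((i - 1 : ℕ) : ℤ) = (i : ℤ) - 1 := by
        have := Nat.cast_sub (by omega : 1 ≤ i) (R := ℤ)
        simpa using this
      push_cast [this]
      exact ⟨trivial, by ring⟩
end
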